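/- Fix n ≥ 2, 0 ≤ j ≤ n-2, and 1 ≤ ℓ ≤ n-1. The number of permutations π of [n] that can be written as π = α n β, where α is a nonempty increasing sequence with first letter ℓ, β is a decreasing sequence, and β has length j, equals the binomial coefficient C(n-ℓ-1, n-j-2). Moreover every such permutation has exactly j descents. -/

import Mathlib

set_option maxHeartbeats 1000000

/-- The word `w` contains the pattern `p`: some subsequence of `w` is
order-isomorphic to `p`. -/
def ContainsPat (w p : List ℕ) : Prop :=
  ∃ s : List ℕ, s.Sublist w ∧ s.length = p.length ∧
    ∀ i j : ℕ, i < p.length → j < p.length → (s[i]! < s[j]! ↔ p[i]! < p[j]!)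

/-- The word `w` avoids the pattern `p`. -/
def AvoidsPat (w p : List ℕ) : Prop := ¬ ContainsPat w p

/-- `π` is the one-line notation of a permutation of `{1,…,n}`. -/
def IsPermList (n : ℕ) (π : List ℕ) : Prop :=
  π.Perm ((List.range n).map (· + 1))

/-- The number of descents of a word. -/
def descList (π : List ℕ) : ℕ :=
  ((List.range (π.length - 1)).filter (fun t => decide (π[t + 1]! < π[t]!))).length

def gfun (n ℓ : ℕ) (S : Finset ℕ) : List ℕ :=
  (ℓ :: S.sort (· ≤ ·)) ++ n :: ((Finset.Ioo 0 n \ insert ℓ S).sort (· ≤ ·)).reverse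

lemma filt_len (m k : ℕ) : ((List.range m).filter (fun t => decide (k ≤ t))).length = m - k := by
  induction m with
  | zero => simp
  | succ m ih =>
    rw [List.range_succ, List.filter_append, List.length_append, ih]
    by_cases h : k ≤ m <;> simp [h] <;> omega

lemma aux_len {n : ℕ} {π : List ℕ} (h : IsPermList n π) : π.length = n := by
  simpa using h.length_eq

lemma aux_nodup {n : ℕ} {π : List ℕ} (h : IsPermList n π) : π.Nodup :=
  h.symm.nodup ((List.nodup_range).map (fun a b => by omega))

lemma aux_mem {n : ℕ} {π : List ℕ} (h : IsPermList n π) (x : ℕ) :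
    x ∈ π ↔ 1 ≤ x ∧ x ≤ n := by
  rw [h.mem_iff]
  simp only [List.mem_map, List.mem_range]
  constructor
  · rintro ⟨a, ha, rfl⟩; omega
  · rintro ⟨h1, h2⟩; exact ⟨x - 1, by omega, by omega⟩

lemma descList_eq (n j : ℕ) (π : List ℕ)
    (h : IsPermList n π) (k : ℕ) (hk : k < n) (hkn : π[k]! = n) (hk1 : 1 ≤ k)
    (hkj : n - 1 - k = j)
    (hinc : ∀ a b, a < b → b < k → π[a]! < π[b]!)
    (hdec : ∀ a b, k < a → a < b → b < n → π[b]! < π[a]!) :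
    ((List.range (π.length - 1)).filter (fun t => decide (π[t + 1]! < π[t]!))).length = j := by
  have hlen : π.length = n := aux_len h
  have hnd : π.Nodup := aux_nodup h
  have hle : ∀ i, i < n → π[i]! ≤ n := by
    intro i hi
    rw [getElem!_pos π i (by omega)]
    exact ((aux_mem h _).1 (List.getElem_mem _)).2
  have hne : ∀ i, i < n → i ≠ k → π[i]! ≠ n := by
    intro i hi hik hcon
    rw [getElem!_pos π i (by omega)] at hcon
    rw [getElem!_pos π k (by omega)] at hkn
    exact hik (hnd.getElem_inj_iff.mp (hcon.trans hkn.symm))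
  have hcongr : ∀ t ∈ List.range (π.length - 1),
      (decide (π[t + 1]! < π[t]!)) = (decide (k ≤ t)) := by
    intro t ht
    rw [List.mem_range] at ht
    have htn : t < n - 1 := by omega
    simp only [decide_eq_decide]
    rcases Nat.lt_or_ge t k with hlt | hge
    · constructor
      · intro hd
        rcases Nat.lt_or_ge (t + 1) k with h1 | h1
        · have := hinc t (t + 1) (by omega) h1
          omega
        · have ht1k : t + 1 = k := by omega
          have := hle t (by omega)
          have := hne t (by omega) (by omega)
          rw [ht1k, hkn] at hd
          omega
      · intro hd; omega
    · constructor
      · intro _; exact hge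
      · intro _
        rcases Nat.eq_or_lt_of_le hge with heq | hgt
        · have := hle (t + 1) (by omega)
          have := hne (t + 1) (by omega) (by omega)
          subst heq
          rw [hkn]
          omega
        · exact hdec t (t + 1) (by omega) (by omega) (by omega)
  rw [List.filter_congr hcongr, filt_len, hlen]
  omega

lemma gfun_props (n j ℓ : ℕ) (hn : 2 ≤ n) (hj : j ≤ n - 2) (hℓ1 : 1 ≤ ℓ)
    (hℓ : ℓ ≤ n - 1) (S : Finset ℕ) (hS : S ⊆ Finset.Ioo ℓ n)
    (hcard : S.card = n - j - 2) :
    IsPermList n (gfun n ℓ S) ∧ (n - 1 - j) < n ∧ (gfun n ℓ S)[n - 1 - j]! = n ∧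
      1 ≤ n - 1 - j ∧ n - 1 - (n - 1 - j) = j ∧ (gfun n ℓ S)[0]! = ℓ ∧
      (∀ a b, a < b → b < n - 1 - j → (gfun n ℓ S)[a]! < (gfun n ℓ S)[b]!) ∧
      (∀ a b, n - 1 - j < a → a < b → b < n → (gfun n ℓ S)[b]! < (gfun n ℓ S)[a]!) := by
  set s : List ℕ := S.sort (· ≤ ·) with hsdef
  set C : Finset ℕ := Finset.Ioo 0 n \ insert ℓ S with hCdef
  set c : List ℕ := (C.sort (· ≤ ·)).reverse with hcdef
  have hg : gfun n ℓ S = (ℓ :: s) ++ n :: c := rfl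
  have hmemS : ∀ x ∈ S, ℓ < x ∧ x < n := by
    intro x hx; have := hS hx; rw [Finset.mem_Ioo] at this; exact this
  have hℓS : ℓ ∉ S := fun h => by have := hmemS ℓ h; omega
  have hsub : insert ℓ S ⊆ Finset.Ioo 0 n := by
    intro x hx
    rw [Finset.mem_insert] at hx
    rw [Finset.mem_Ioo]
    rcases hx with rfl | hx
    · omega
    · have := hmemS x hx; omega
  have hsl : s.length = n - j - 2 := by rw [hsdef, Finset.length_sort, hcard]
  have hCcard : C.card = j := by
    rw [hCdef, Finset.card_sdiff_of_subset hsub, Finset.card_insert_of_notMem hℓS, Nat.card_Ioo, hcard]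
    omega
  have hcl : c.length = j := by rw [hcdef, List.length_reverse, Finset.length_sort, hCcard]
  have hmems : ∀ x, x ∈ s ↔ x ∈ S := by intro x; rw [hsdef, Finset.mem_sort]
  have hmemc : ∀ x, x ∈ c ↔ (0 < x ∧ x < n ∧ x ≠ ℓ ∧ x ∉ S) := by
    intro x
    rw [hcdef, List.mem_reverse, Finset.mem_sort, hCdef, Finset.mem_sdiff, Finset.mem_Ioo,
      Finset.mem_insert]
    tauto
  have hlen : (gfun n ℓ S).length = n := by
    rw [hg]; simp only [List.length_append, List.length_cons, hsl, hcl]; omega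
  have hnd : (gfun n ℓ S).Nodup := by
    rw [hg, List.nodup_append]
    refine ⟨?_, ?_, ?_⟩
    · rw [List.nodup_cons]
      exact ⟨fun h => hℓS ((hmems ℓ).1 h), Finset.sort_nodup _ _⟩
    · rw [List.nodup_cons]
      constructor
      · intro h; rw [hmemc] at h; omega
      · rw [hcdef, List.nodup_reverse]; exact Finset.sort_nodup _ _
    · intro x hx y hx' hxy; subst hxy
      rw [List.mem_cons] at hx hx'
      rcases hx with rfl | hx
      · rcases hx' with h | h
        · omega
        · rw [hmemc] at h; omega
      · have hxS := (hmems x).1 hx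
        rcases hx' with rfl | h
        · have := hmemS _ hxS; omega
        · rw [hmemc] at h; exact h.2.2.2 hxS
  have hperm : IsPermList n (gfun n ℓ S) := by
    rw [IsPermList]
    rw [List.perm_ext_iff_of_nodup hnd ((List.nodup_range).map (fun a b => by omega))]
    intro x
    have : x ∈ (List.range n).map (· + 1) ↔ 1 ≤ x ∧ x ≤ n := by
      simp only [List.mem_map, List.mem_range]
      constructor
      · rintro ⟨a, ha, rfl⟩; omega
      · rintro ⟨h1, h2⟩; exact ⟨x - 1, by omega, by omega⟩
    rw [this, hg]
    simp only [List.mem_append, List.mem_cons]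
    constructor
    · rintro ((rfl | hx) | (rfl | hx))
      · omega
      · have := hmemS _ ((hmems x).1 hx); omega
      · omega
      · rw [hmemc] at hx; omega
    · rintro ⟨h1, h2⟩
      by_cases hxn : x = n
      · exact Or.inr (Or.inl hxn)
      by_cases hxl : x = ℓ
      · exact Or.inl (Or.inl hxl)
      by_cases hxS : x ∈ S
      · exact Or.inl (Or.inr ((hmems x).2 hxS))
      · exact Or.inr (Or.inr ((hmemc x).2 ⟨by omega, by omega, hxl, hxS⟩))
  have hk0 : (ℓ :: s).length = n - 1 - j := by
    rw [List.length_cons, hsl]; omega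
  have hsort1 : (ℓ :: s).Pairwise (· < ·) := by
    rw [List.pairwise_cons]
    exact ⟨fun b hb => (hmemS b ((hmems b).1 hb)).1, (Finset.sortedLT_sort S).pairwise⟩
  have hsort2 : c.Pairwise (fun a b => b < a) := by
    rw [hcdef, List.pairwise_reverse]
    exact (Finset.sortedLT_sort C).pairwise
  have hlen2 : ((ℓ :: s) ++ n :: c).length = n := hg ▸ hlen
  refine ⟨hperm, by omega, ?_, by omega, by omega, ?_, ?_, ?_⟩
  · rw [hg, getElem!_pos _ _ (by rw [hlen2]; omega),
      List.getElem_append_right (by omega : (ℓ :: s).length ≤ n - 1 - j)]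
    simp [show n - 1 - j - (s.length + 1) = 0 from by simp only [hsl]; omega]
  · rw [hg, getElem!_pos _ _ (by rw [hlen2]; omega),
      List.getElem_append_left (by omega : 0 < (ℓ :: s).length)]
    simp
  · intro a b hab hbk
    rw [hg, getElem!_pos _ _ (by rw [hlen2]; omega), getElem!_pos _ _ (by rw [hlen2]; omega),
      List.getElem_append_left (by omega : a < (ℓ :: s).length),
      List.getElem_append_left (by omega : b < (ℓ :: s).length)]
    exact List.pairwise_iff_getElem.mp hsort1 a b _ _ hab
  · intro a b hka hab hbn
    rw [hg, getElem!_pos _ _ (by rw [hlen2]; omega), getElem!_pos _ _ (by rw [hlen2]; omega),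
      List.getElem_append_right (by omega : (ℓ :: s).length ≤ a),
      List.getElem_append_right (by omega : (ℓ :: s).length ≤ b)]
    have hclen : c.length = j := hcl
    obtain ⟨ma, hma⟩ : ∃ m, a - (ℓ :: s).length = m + 1 := ⟨a - (ℓ :: s).length - 1, by omega⟩
    obtain ⟨mb, hmb⟩ : ∃ m, b - (ℓ :: s).length = m + 1 := ⟨b - (ℓ :: s).length - 1, by omega⟩
    simp only [hma, hmb, List.getElem_cons_succ]
    exact List.pairwise_iff_getElem.mp hsort2 ma mb _ _ (by omega)

lemma getElem_idx_congr {α : Type*} (l : List α) {i j : ℕ} (h : i = j) (hi : i < l.length) :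
    l[i] = l[j]'(h ▸ hi) := by subst h; rfl

lemma recon (n j ℓ : ℕ) (hn : 2 ≤ n) (hj : j ≤ n - 2) (hℓ1 : 1 ≤ ℓ) (hℓ : ℓ ≤ n - 1)
    (π : List ℕ) (hperm : IsPermList n π) (k : ℕ) (hk : k < n) (hkn : π[k]! = n)
    (hk1 : 1 ≤ k) (hkj : n - 1 - k = j) (h0 : π[0]! = ℓ)
    (hinc : ∀ a b, a < b → b < k → π[a]! < π[b]!)
    (hdec : ∀ a b, k < a → a < b → b < n → π[b]! < π[a]!) :
    ∃ S ∈ Finset.powersetCard (n - j - 2) (Finset.Ioo ℓ n), π = gfun n ℓ S := by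
  have hlen : π.length = n := aux_len hperm
  have hnd : π.Nodup := aux_nodup hperm
  have hkeq : k = n - 1 - j := by omega
  have hkn' : ∀ (hh : k < π.length), π[k] = n := fun hh => by
    rwa [getElem!_pos π k hh] at hkn
  have h0' : ∀ (hh : 0 < π.length), π[0] = ℓ := fun hh => by
    rwa [getElem!_pos π 0 hh] at h0
  have hinc' : ∀ a b (ha : a < π.length) (hb : b < π.length), a < b → b < k → π[a] < π[b] := by
    intro a b ha hb hab hbk
    have := hinc a b hab hbk
    rwa [getElem!_pos π a ha, getElem!_pos π b hb] at this
  have hdec' : ∀ a b (ha : a < π.length) (hb : b < π.length), k < a → a < b → b < n →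
      π[b] < π[a] := by
    intro a b ha hb hka hab hbn
    have := hdec a b hka hab hbn
    rwa [getElem!_pos π a ha, getElem!_pos π b hb] at this
  have hπle : ∀ i (hi : i < π.length), π[i] ≤ n := by
    intro i hi
    exact ((aux_mem hperm _).1 (List.getElem_mem _)).2
  have hπne : ∀ i (hi : i < π.length), i ≠ k → π[i] ≠ n := by
    intro i hi hik hcon
    exact hik (hnd.getElem_inj_iff.mp (hcon.trans (hkn' (by omega)).symm))
  set s : List ℕ := List.drop 1 (List.take k π) with hsdef
  set q : List ℕ := List.drop (k + 1) π with hqdef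
  have hslen : s.length = k - 1 := by
    rw [hsdef, List.length_drop, List.length_take, hlen]; omega
  have hqlen : q.length = n - k - 1 := by
    rw [hqdef, List.length_drop, hlen]; omega
  have hgs : ∀ i (hi : i < s.length) (h2 : 1 + i < π.length), s[i] = π[1 + i] := by
    intro i hi h2
    simp only [hsdef, List.getElem_drop, List.getElem_take]
  have hgq : ∀ i (hi : i < q.length) (h2 : k + 1 + i < π.length), q[i] = π[k + 1 + i] := by
    intro i hi h2
    simp only [hqdef, List.getElem_drop]
  have snodup : s.Nodup := (((List.drop_sublist 1 _).trans (List.take_sublist k π))).nodup hnd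
  have qnodup : q.Nodup := (List.drop_sublist (k+1) π).nodup hnd
  have ssorted : s.Pairwise (· < ·) := by
    rw [List.pairwise_iff_getElem]
    intro a b ha hb hab
    rw [hgs a ha (by omega), hgs b hb (by omega)]
    exact hinc' (1 + a) (1 + b) (by omega) (by omega) (by omega) (by omega)
  have qdec : q.Pairwise (fun a b => b < a) := by
    rw [List.pairwise_iff_getElem]
    intro a b ha hb hab
    rw [hgq a ha (by omega), hgq b hb (by omega)]
    exact hdec' (k + 1 + a) (k + 1 + b) (by omega) (by omega) (by omega) (by omega) (by omega)
  have smem : ∀ x ∈ s, ℓ < x ∧ x < n := by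
    intro x hx
    obtain ⟨i, hi, rfl⟩ := List.mem_iff_getElem.mp hx
    rw [hgs i hi (by omega)]
    constructor
    · rw [← h0' (by omega)]
      exact hinc' 0 (1 + i) (by omega) (by omega) (by omega) (by omega)
    · have h1 := hπle (1 + i) (by omega)
      have h2 := hπne (1 + i) (by omega) (by omega)
      omega
  have qmem : ∀ x ∈ q, 1 ≤ x ∧ x < n ∧ x ≠ ℓ ∧ x ∉ s := by
    intro x hx
    obtain ⟨i, hi, rfl⟩ := List.mem_iff_getElem.mp hx
    rw [hgq i hi (by omega)]
    refine ⟨((aux_mem hperm _).1 (List.getElem_mem _)).1, ?_, ?_, ?_⟩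
    · have h1 := hπle (k + 1 + i) (by omega)
      have h2 := hπne (k + 1 + i) (by omega) (by omega)
      omega
    · intro hcon
      rw [← h0' (by omega)] at hcon
      have := hnd.getElem_inj_iff.mp hcon
      omega
    · intro hcon
      obtain ⟨i', hi', he⟩ := List.mem_iff_getElem.mp hcon
      rw [hgs i' hi' (by omega)] at he
      have := hnd.getElem_inj_iff.mp he.symm
      omega
  set S : Finset ℕ := s.toFinset with hSdef
  have hmemS : ∀ x, x ∈ S ↔ x ∈ s := by intro x; rw [hSdef, List.mem_toFinset]
  have hScard : S.card = n - j - 2 := by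
    rw [hSdef, List.toFinset_card_of_nodup snodup, hslen]; omega
  have hSsub : S ⊆ Finset.Ioo ℓ n := by
    intro x hx
    rw [Finset.mem_Ioo]
    exact smem x ((hmemS x).1 hx)
  have hSsort : S.sort (· ≤ ·) = s :=
    (List.toFinset_sort _ snodup).2 (ssorted.imp le_of_lt)
  have hdecomp : π = (ℓ :: s) ++ n :: q := by
    have hls : (ℓ :: s).length = k := by rw [List.length_cons, hslen]; omega
    apply List.ext_getElem
    · simp only [List.length_append, List.length_cons, hslen, hqlen, hlen]
      omega
    · intro i h1 h2
      rcases Nat.lt_or_ge i k with hik | hik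
      · rw [List.getElem_append_left (by omega : i < (ℓ :: s).length)]
        rcases Nat.eq_zero_or_pos i with rfl | hi0
        · rw [List.getElem_cons_zero, h0' (by omega)]
        · obtain ⟨m, rfl⟩ : ∃ m, i = m + 1 := ⟨i - 1, by omega⟩
          rw [List.getElem_cons_succ, hgs m (by omega) (by omega)]
          exact getElem_idx_congr π (by omega) _
      · rw [List.getElem_append_right (by omega : (ℓ :: s).length ≤ i)]
        rcases Nat.eq_or_lt_of_le hik with heq | hik'
        · rw [getElem_idx_congr _ (show i - (ℓ :: s).length = 0 from by omega),
            List.getElem_cons_zero, getElem_idx_congr π (show i = k from by omega),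
            hkn' (by omega)]
        · obtain ⟨m, hm⟩ : ∃ m, i - (ℓ :: s).length = m + 1 := ⟨i - k - 1, by omega⟩
          rw [getElem_idx_congr _ hm, List.getElem_cons_succ, hgq m (by omega) (by omega)]
          exact getElem_idx_congr π (by omega) _
  have hsortC : (Finset.Ioo 0 n \ insert ℓ S).sort (· ≤ ·) = q.reverse := by
    refine (fun h1 h2 => List.Perm.eq_of_pairwise' (Finset.pairwise_sort _ _) h2 h1) ?_ ?_
    · rw [List.perm_ext_iff_of_nodup (Finset.sort_nodup _ _) (List.nodup_reverse.mpr qnodup)]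
      intro x
      rw [Finset.mem_sort, List.mem_reverse, Finset.mem_sdiff, Finset.mem_Ioo,
        Finset.mem_insert, hmemS]
      constructor
      · rintro ⟨⟨hx0, hxn⟩, hx2⟩
        push_neg at hx2
        have hxπ : x ∈ π := (aux_mem hperm x).2 ⟨by omega, by omega⟩
        obtain ⟨p, hp, rfl⟩ := List.mem_iff_getElem.mp hxπ
        have hpk : k < p := by
          rcases Nat.lt_trichotomy p k with h | rfl | h
          · exfalso
            rcases Nat.eq_zero_or_pos p with rfl | hp0
            · exact hx2.1 (h0' (by omega))
            · apply hx2.2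
              apply List.mem_iff_getElem.mpr
              refine ⟨p - 1, by omega, ?_⟩
              rw [hgs (p - 1) (by omega) (by omega)]
              exact getElem_idx_congr π (by omega) _
          · have := hkn' (by omega); omega
          · exact h
        apply List.mem_iff_getElem.mpr
        refine ⟨p - k - 1, by omega, ?_⟩
        rw [hgq (p - k - 1) (by omega) (by omega)]
        exact getElem_idx_congr π (by omega) _
      · intro hx
        obtain ⟨hx1, hx2, hx3, hx4⟩ := qmem x hx
        exact ⟨⟨by omega, hx2⟩, by tauto⟩
    · exact List.pairwise_reverse.mpr (qdec.imp (fun h => le_of_lt h))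
  refine ⟨S, Finset.mem_powersetCard.mpr ⟨hSsub, hScard⟩, ?_⟩
  rw [gfun, hSsort, hsortC, List.reverse_reverse, hdecomp]

/-- Permutations of `[n]` of the form `α n β` with `α` nonempty increasing with
first letter `ℓ` and `β` decreasing of length `j` are counted by
`C(n-ℓ-1, n-j-2)`, and each has exactly `j` descents. -/
theorem stmt5 (n j ℓ : ℕ) (hn : 2 ≤ n) (hj : j ≤ n - 2) (hℓ1 : 1 ≤ ℓ)
    (hℓ : ℓ ≤ n - 1) :
    {π : List ℕ | IsPermList n π ∧ ∃ k, k < n ∧ π[k]! = n ∧ 1 ≤ k ∧ n - 1 - k = j ∧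
        π[0]! = ℓ ∧ (∀ a b, a < b → b < k → π[a]! < π[b]!) ∧
        (∀ a b, k < a → a < b → b < n → π[b]! < π[a]!)}.ncard
      = Nat.choose (n - ℓ - 1) (n - j - 2) ∧
    ∀ π ∈ {π : List ℕ | IsPermList n π ∧ ∃ k, k < n ∧ π[k]! = n ∧ 1 ≤ k ∧
        n - 1 - k = j ∧ π[0]! = ℓ ∧ (∀ a b, a < b → b < k → π[a]! < π[b]!) ∧
        (∀ a b, k < a → a < b → b < n → π[b]! < π[a]!)},
      descList π = j := by
  have hset : {π : List ℕ | IsPermList n π ∧ ∃ k, k < n ∧ π[k]! = n ∧ 1 ≤ k ∧ n - 1 - k = j ∧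
        π[0]! = ℓ ∧ (∀ a b, a < b → b < k → π[a]! < π[b]!) ∧
        (∀ a b, k < a → a < b → b < n → π[b]! < π[a]!)}
      = gfun n ℓ '' ↑(Finset.powersetCard (n - j - 2) (Finset.Ioo ℓ n)) := by
    ext π
    simp only [Set.mem_setOf_eq, Set.mem_image, Finset.mem_coe]
    constructor
    · rintro ⟨hperm, k, hk, hkn, hk1, hkj, h0, hinc, hdec⟩
      obtain ⟨S, hS, heq⟩ := recon n j ℓ hn hj hℓ1 hℓ π hperm k hk hkn hk1 hkj h0 hinc hdec
      exact ⟨S, hS, heq.symm⟩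
    · rintro ⟨S, hS, rfl⟩
      rw [Finset.mem_powersetCard] at hS
      obtain ⟨h1, h2, h3, h4, h5, h6, h7, h8⟩ := gfun_props n j ℓ hn hj hℓ1 hℓ S hS.1 hS.2
      exact ⟨h1, n - 1 - j, h2, h3, h4, h5, h6, h7, h8⟩
  have hinj : Set.InjOn (gfun n ℓ) ↑(Finset.powersetCard (n - j - 2) (Finset.Ioo ℓ n)) := by
    intro S hS S' hS' heq
    rw [Finset.mem_coe, Finset.mem_powersetCard] at hS hS'
    rw [gfun, gfun, List.cons_append, List.cons_append, List.cons.injEq] at heq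
    have h1 : S.sort (· ≤ ·) = S'.sort (· ≤ ·) :=
      (List.append_inj heq.2
        (by rw [Finset.length_sort, Finset.length_sort, hS.2, hS'.2])).1
    calc S = (S.sort (· ≤ ·)).toFinset := (Finset.sort_toFinset _ _).symm
      _ = (S'.sort (· ≤ ·)).toFinset := by rw [h1]
      _ = S' := Finset.sort_toFinset _ _
  constructor
  · rw [hset, Set.ncard_image_of_injOn hinj, Set.ncard_coe_finset,
      Finset.card_powersetCard, Nat.card_Ioo]
  · rintro π ⟨hperm, k, hk, hkn, hk1, hkj, h0, hinc, hdec⟩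
    exact descList_eq n j π hperm k hk hkn hk1 hkj hinc hdec
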